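/- Let μ be a finite positive Borel measure on [0,1) and s > 0. If the sequence of moments μ_n = ∫_{[0,1)} t^n dμ(t) satisfies sup_{n≥0} (1+n)^s μ_n < ∞, then μ is an s-Carleson measure, i.e. sup_{t∈[0,1)} μ([t,1))/(1-t)^s < ∞. -/

import Mathlib

open MeasureTheory Set Metric Complex

theorem carleson_of_moments (μ : Measure ℝ) [IsFiniteMeasure μ] (s : ℝ) (hs : 0 < s)
    (hmom : ∃ C : ℝ, ∀ n : ℕ, ((1:ℝ) + n) ^ s * (∫ t in Set.Ico (0:ℝ) 1, t ^ n ∂μ) ≤ C) :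
    ∃ C : ℝ, ∀ t ∈ Set.Ico (0:ℝ) 1, (μ (Set.Ico t 1)).toReal ≤ C * (1 - t) ^ s := by
  obtain ⟨C, hC⟩ := hmom
  -- integrability of x^n on Ico 0 1
  have hint : ∀ n : ℕ, IntegrableOn (fun x : ℝ => x ^ n) (Set.Ico 0 1) μ := by
    intro n
    apply Measure.integrableOn_of_bounded (M := 1) (measure_ne_top μ _)
      ((measurable_id.pow_const n).aestronglyMeasurable)
    filter_upwards [ae_restrict_mem measurableSet_Ico] with x hx
    simp only [id_eq, Real.norm_eq_abs]
    rw [_root_.abs_pow, _root_.abs_of_nonneg hx.1]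
    exact pow_le_one₀ hx.1 hx.2.le
  -- key: t^n * μ([t,1)) ≤ μ_n
  have key : ∀ t ∈ Set.Ico (0:ℝ) 1, ∀ n : ℕ,
      t ^ n * (μ (Set.Ico t 1)).toReal ≤ ∫ x in Set.Ico (0:ℝ) 1, x ^ n ∂μ := by
    intro t ht n
    have hsub : Set.Ico t 1 ⊆ Set.Ico (0:ℝ) 1 := Set.Ico_subset_Ico ht.1 le_rfl
    have h2 : ∫ x in Set.Ico t 1, x ^ n ∂μ ≤ ∫ x in Set.Ico (0:ℝ) 1, x ^ n ∂μ := by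
      apply setIntegral_mono_set (hint n) ?_ hsub.eventuallyLE
      filter_upwards [ae_restrict_mem measurableSet_Ico] with x hx
      exact pow_nonneg hx.1 n
    have h1 : t ^ n * (μ (Set.Ico t 1)).toReal ≤ ∫ x in Set.Ico t 1, x ^ n ∂μ := by
      have := setIntegral_mono_on (integrableOn_const (measure_ne_top μ _))
        ((hint n).mono_set hsub) measurableSet_Ico
        (fun x hx => pow_le_pow_left₀ ht.1 hx.1 n)
      simpa [setIntegral_const, mul_comm, Measure.real] using this
    linarith
  -- C ≥ 0
  have hC0 : 0 ≤ C := by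
    have h := hC 0
    have h0 : (0:ℝ) ≤ ∫ x in Set.Ico (0:ℝ) 1, x ^ 0 ∂μ := by
      simpa using key 0 ⟨le_refl 0, one_pos⟩ 0
    simp only [Nat.cast_zero, add_zero, Real.one_rpow, one_mul] at h
    linarith
  refine ⟨max ((μ Set.univ).toReal * 2 ^ s) (4 * C * 2 ^ s), fun t ht => ?_⟩
  have h1t : (0:ℝ) < 1 - t := by linarith [ht.2]
  by_cases hth : t < 1/2
  · -- easy case: (1-t)^s ≥ (1/2)^s
    have hh : ((1:ℝ)/2) ^ s ≤ (1 - t) ^ s :=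
      Real.rpow_le_rpow (by norm_num) (by linarith) hs.le
    have hm : (μ (Set.Ico t 1)).toReal ≤ (μ Set.univ).toReal :=
      ENNReal.toReal_mono (measure_ne_top μ _) (measure_mono (Set.subset_univ _))
    have h2s : (0:ℝ) < (2:ℝ) ^ s := Real.rpow_pos_of_pos two_pos s
    have hmul : (2:ℝ) ^ s * ((1:ℝ)/2) ^ s = 1 := by
      rw [← Real.mul_rpow (by norm_num) (by norm_num)]
      norm_num
    calc (μ (Set.Ico t 1)).toReal ≤ (μ Set.univ).toReal := hm
      _ = (μ Set.univ).toReal * ((2:ℝ) ^ s * ((1:ℝ)/2) ^ s) := by rw [hmul, mul_one]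
      _ ≤ (μ Set.univ).toReal * ((2:ℝ) ^ s * (1 - t) ^ s) := by
          apply mul_le_mul_of_nonneg_left (mul_le_mul_of_nonneg_left hh h2s.le)
            ENNReal.toReal_nonneg
      _ = (μ Set.univ).toReal * 2 ^ s * (1 - t) ^ s := by ring
      _ ≤ max ((μ Set.univ).toReal * 2 ^ s) (4 * C * 2 ^ s) * (1 - t) ^ s :=
          mul_le_mul_of_nonneg_right (le_max_left _ _)
            (Real.rpow_nonneg h1t.le s)
  · -- t ≥ 1/2
    push_neg at hth
    set m : ℕ := ⌊1 / (2 * (1 - t))⌋₊ with hm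
    set n : ℕ := 2 * m with hn
    have hpos : (0:ℝ) < 1 / (2 * (1 - t)) := by positivity
    have hm1 : (m:ℝ) ≤ 1 / (2 * (1 - t)) := Nat.floor_le hpos.le
    have hm2 : 1 / (2 * (1 - t)) < (m:ℝ) + 1 := Nat.lt_floor_add_one _
    -- m * (1-t) ≤ 1/2
    have hmt : (m:ℝ) * (1 - t) ≤ 1 / 2 := by
      rw [le_div_iff₀ (by positivity : (0:ℝ) < 2 * (1 - t))] at hm1
      nlinarith
    -- Bernoulli: t^m ≥ 1/2
    have htm : (1:ℝ)/2 ≤ t ^ m := by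
      have hb : 1 + (m:ℝ) * (t - 1) ≤ (1 + (t - 1)) ^ m :=
        one_add_mul_le_pow (by linarith) m
      have : (1:ℝ) + (t - 1) = t := by ring
      rw [this] at hb
      nlinarith
    have htn : (1:ℝ)/4 ≤ t ^ n := by
      have : t ^ n = (t ^ m) ^ 2 := by rw [hn, Nat.mul_comm, pow_mul]
      rw [this]
      nlinarith
    -- (1+n) ≥ 1/(2(1-t))
    have hnn : 1 / (2 * (1 - t)) ≤ (1:ℝ) + n := by
      have : ((n:ℝ)) = 2 * m := by simp [hn]
      nlinarith [Nat.cast_nonneg (α := ℝ) m]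
    have hA : (0:ℝ) < ((1:ℝ) + n) ^ s := Real.rpow_pos_of_pos (by positivity) s
    -- (1/(2(1-t)))^s ≤ (1+n)^s
    have hAB : (1 / (2 * (1 - t))) ^ s ≤ ((1:ℝ) + n) ^ s :=
      Real.rpow_le_rpow hpos.le hnn hs.le
    have hBinv : (1 / (2 * (1 - t))) ^ s * (2 * (1 - t)) ^ s = 1 := by
      rw [← Real.mul_rpow (by positivity) (by positivity)]
      rw [one_div_mul_cancel (by positivity)]
      exact Real.one_rpow s
    have hB : (0:ℝ) < (2 * (1 - t)) ^ s := Real.rpow_pos_of_pos (by positivity) s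
    have hABge : 1 ≤ ((1:ℝ) + n) ^ s * (2 * (1 - t)) ^ s := by
      calc (1:ℝ) = (1 / (2 * (1 - t))) ^ s * (2 * (1 - t)) ^ s := hBinv.symm
        _ ≤ ((1:ℝ) + n) ^ s * (2 * (1 - t)) ^ s :=
            mul_le_mul_of_nonneg_right hAB hB.le
    -- assemble
    have hkey := key t ht n
    have hI : ∫ x in Set.Ico (0:ℝ) 1, x ^ n ∂μ ≤ C / ((1:ℝ) + n) ^ s := by
      rw [le_div_iff₀ hA]
      linarith [hC n, mul_comm (((1:ℝ) + n) ^ s) (∫ x in Set.Ico (0:ℝ) 1, x ^ n ∂μ)]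
    have hM0 : (0:ℝ) ≤ (μ (Set.Ico t 1)).toReal := ENNReal.toReal_nonneg
    have hM4 : (μ (Set.Ico t 1)).toReal ≤ 4 * (C / ((1:ℝ) + n) ^ s) := by
      nlinarith [key t ht n]
    have hdiv : C / ((1:ℝ) + n) ^ s ≤ C * (2 * (1 - t)) ^ s := by
      rw [div_le_iff₀ hA]
      nlinarith
    have hfin : (μ (Set.Ico t 1)).toReal ≤ 4 * C * (2 * (1 - t)) ^ s := by nlinarith
    have hsplit : (2 * (1 - t)) ^ s = 2 ^ s * (1 - t) ^ s :=
      Real.mul_rpow (by norm_num) h1t.le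
    calc (μ (Set.Ico t 1)).toReal ≤ 4 * C * (2 * (1 - t)) ^ s := hfin
      _ = 4 * C * 2 ^ s * (1 - t) ^ s := by rw [hsplit]; ring
      _ ≤ max ((μ Set.univ).toReal * 2 ^ s) (4 * C * 2 ^ s) * (1 - t) ^ s :=
          mul_le_mul_of_nonneg_right (le_max_right _ _) (Real.rpow_nonneg h1t.le s)
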